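/- Let (S, n) ⊆ (B, M) be a finite extension of local domains of characteristic p > 0 with S regular and F-finite, and B^q ⊆ S for some q = p^e. Then the following are equivalent: (i) B^q ⊆ S^q + n^q (inside S); (ii) B = S + M and M is the integral closure of the ideal nB in B. -/

import Mathlib

open MvPolynomial

section Semiring
variable {R : Type*} [CommSemiring R]

def MSupp (F : MvPolynomial ℕ R) (c : ℕ) : Prop := ∀ m ∈ F.support, ∀ j ∈ m.support, j < c

def Jd (x : ℕ → R) (c : ℕ) : Ideal R := Ideal.span (x '' Set.Iio c)

lemma isHom_degree {φ : MvPolynomial ℕ R} {n : ℕ} (h : φ.IsHomogeneous n) {m : ℕ →₀ ℕ}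
    (hm : coeff m φ ≠ 0) : m.degree = n := by
  have := h hm; rwa [Finsupp.degree_eq_weight_one]

lemma isHom_of {φ : MvPolynomial ℕ R} {n : ℕ}
    (h : ∀ m : ℕ →₀ ℕ, coeff m φ ≠ 0 → m.degree = n) : φ.IsHomogeneous n := by
  intro d hd; have := h d hd; rwa [Finsupp.degree_eq_weight_one] at this

lemma mem_Jd {x : ℕ → R} {c j : ℕ} (hj : j < c) : x j ∈ Jd x c :=
  Ideal.subset_span ⟨j, hj, rfl⟩

lemma Jd_mono {x : ℕ → R} {c c' : ℕ} (h : c ≤ c') : Jd x c ≤ Jd x c' :=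
  Ideal.span_mono (Set.image_mono fun _ hj => lt_of_lt_of_le hj h)

lemma prod_pow_mem {I : Ideal R} {x : ℕ → R} (m : ℕ →₀ ℕ)
    (hx : ∀ j ∈ m.support, x j ∈ I) :
    (∏ j ∈ m.support, x j ^ m j) ∈ I ^ m.degree := by
  have h1 : (∏ j ∈ m.support, x j ^ m j) ∈ ∏ j ∈ m.support, I ^ m j :=
    Ideal.prod_mem_prod fun j hj => Ideal.pow_mem_pow (hx j hj) _
  rwa [Finset.prod_pow_eq_pow_sum] at h1

lemma eval_mem_pow {I : Ideal R} {F : MvPolynomial ℕ R} {n : ℕ} {x : ℕ → R}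
    (hF : F.IsHomogeneous n) (hx : ∀ m ∈ F.support, ∀ j ∈ m.support, x j ∈ I) :
    eval x F ∈ I ^ n := by
  rw [eval_eq]
  refine Ideal.sum_mem _ fun m hm => ?_
  have hdeg : m.degree = n := isHom_degree hF (mem_support_iff.mp hm)
  exact Ideal.mul_mem_left _ _ (hdeg ▸ prod_pow_mem m (hx m hm))

lemma eval_mem_pow_succ {I : Ideal R} {F : MvPolynomial ℕ R} {n : ℕ} {x : ℕ → R}
    (hF : F.IsHomogeneous n) (hx : ∀ m ∈ F.support, ∀ j ∈ m.support, x j ∈ I)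
    (hc : ∀ m, F.coeff m ∈ I) :
    eval x F ∈ I ^ (n + 1) := by
  rw [eval_eq, pow_succ']
  refine Ideal.sum_mem _ fun m hm => ?_
  have hdeg : m.degree = n := isHom_degree hF (mem_support_iff.mp hm)
  exact Ideal.mul_mem_mul (hc m) (hdeg ▸ prod_pow_mem m (hx m hm))

lemma MSupp_add {F G : MvPolynomial ℕ R} {c : ℕ} (hF : MSupp F c) (hG : MSupp G c) :
    MSupp (F + G) c := by
  intro m hm j hj
  rcases Finset.mem_union.mp (MvPolynomial.support_add hm) with h | h
  · exact hF m h j hj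
  · exact hG m h j hj

lemma MSupp_mul {F G : MvPolynomial ℕ R} {c : ℕ} (hF : MSupp F c) (hG : MSupp G c) :
    MSupp (F * G) c := by
  intro m hm j hj
  obtain ⟨m₁, hm₁, m₂, hm₂, rfl⟩ := Finset.mem_add.mp (MvPolynomial.support_mul F G hm)
  rcases Finset.mem_union.mp (Finsupp.support_add hj) with h | h
  · exact hF m₁ hm₁ j h
  · exact hG m₂ hm₂ j h

lemma MSupp_C {r : R} {c : ℕ} : MSupp (C r : MvPolynomial ℕ R) c := by
  intro m hm j hj
  have : m = 0 := by
    by_contra h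
    simp [MvPolynomial.coeff_C, h] at hm
    exact h hm.1.symm
  simp [this] at hj

lemma MSupp_C_mul {F : MvPolynomial ℕ R} {r : R} {c : ℕ} (hF : MSupp F c) :
    MSupp (C r * F) c := MSupp_mul MSupp_C hF

lemma MSupp_X {j c : ℕ} (hj : j < c) : MSupp (X j : MvPolynomial ℕ R) c := by
  intro m hm i hi
  have : m = Finsupp.single j 1 := by
    by_contra h
    simp [MvPolynomial.coeff_X', h] at hm
    exact h hm.1.symm
  subst this
  have h := Finsupp.mem_support_iff.mp hi
  by_cases hij : i = j
  · exact hij ▸ hj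
  · simp [Finsupp.single_apply, Ne.symm hij] at h

lemma MSupp_zero {c : ℕ} : MSupp (0 : MvPolynomial ℕ R) c := by
  intro m hm; simp at hm

/-- Surjectivity: every element of `(Jd x c)^n` is a value of a homogeneous polynomial
of degree `n` in the variables `< c`. -/
lemma exists_poly (x : ℕ → R) (c : ℕ) : ∀ (n : ℕ) {y : R}, y ∈ Jd x c ^ n →
    ∃ F : MvPolynomial ℕ R, F.IsHomogeneous n ∧ MSupp F c ∧ eval x F = y := by
  intro n
  induction n with
  | zero =>
    intro y _
    exact ⟨C y, isHomogeneous_C _ _, MSupp_C, by simp⟩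
  | succ n ih =>
    intro y hy
    rw [pow_succ] at hy
    refine Submodule.mul_induction_on hy ?_ ?_
    · intro b hb a ha
      obtain ⟨F, hFh, hFs, hFe⟩ := ih hb
      refine Submodule.span_induction
        (p := fun a _ => ∃ G : MvPolynomial ℕ R,
          G.IsHomogeneous (n + 1) ∧ MSupp G c ∧ eval x G = b * a) ?_ ?_ ?_ ?_ ha
      · rintro _ ⟨j, hj, rfl⟩
        exact ⟨F * X j, hFh.mul (isHomogeneous_X _ _), MSupp_mul hFs (MSupp_X hj),
          by simp [hFe]⟩
      · exact ⟨0, isHomogeneous_zero _ _ _, MSupp_zero, by simp⟩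
      · rintro a₁ a₂ _ _ ⟨G₁, h₁, s₁, e₁⟩ ⟨G₂, h₂, s₂, e₂⟩
        exact ⟨G₁ + G₂, h₁.add h₂, MSupp_add s₁ s₂, by simp [e₁, e₂, mul_add]⟩
      · rintro r a _ ⟨G, hG, sG, eG⟩
        refine ⟨C r * G, hG.C_mul r, MSupp_C_mul sG, ?_⟩
        simp [eG, smul_eq_mul]; ring
    · rintro y₁ y₂ ⟨G₁, h₁, s₁, e₁⟩ ⟨G₂, h₂, s₂, e₂⟩
      exact ⟨G₁ + G₂, h₁.add h₂, MSupp_add s₁ s₂, by simp [e₁, e₂]⟩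

lemma exists_poly_coeff (x : ℕ → R) (c : ℕ) (n : ℕ) {y : R} (hy : y ∈ Jd x c ^ (n + 1)) :
    ∃ G : MvPolynomial ℕ R, G.IsHomogeneous n ∧ MSupp G c ∧
      (∀ m, coeff m G ∈ Jd x c) ∧ eval x G = y := by
  rw [pow_succ] at hy
  refine Submodule.mul_induction_on hy ?_ ?_
  · intro b hb a ha
    obtain ⟨F, hFh, hFs, hFe⟩ := exists_poly x c n hb
    refine ⟨C a * F, hFh.C_mul a, MSupp_C_mul hFs, ?_, by simp [hFe]; ring⟩
    intro m
    rw [coeff_C_mul]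
    exact Ideal.mul_mem_right _ _ ha
  · rintro y₁ y₂ ⟨G₁, h₁, s₁, c₁, e₁⟩ ⟨G₂, h₂, s₂, c₂, e₂⟩
    refine ⟨G₁ + G₂, h₁.add h₂, MSupp_add s₁ s₂, ?_, by simp [e₁, e₂]⟩
    intro m
    rw [coeff_add]
    exact add_mem (c₁ m) (c₂ m)

end Semiring

section Ring
variable {R : Type*} [CommRing R] (x : ℕ → R)

lemma degree_add' (f g : ℕ →₀ ℕ) : (f + g).degree = f.degree + g.degree := by
  simp [Finsupp.degree_eq_weight_one]

lemma degree_single' (j : ℕ) : (Finsupp.single j 1 : ℕ →₀ ℕ).degree = 1 := by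
  simp [Finsupp.degree_eq_weight_one, Finsupp.weight_apply, Finsupp.sum_single_index]

lemma MSupp_sub {F G : MvPolynomial ℕ R} {c : ℕ} (hF : MSupp F c) (hG : MSupp G c) :
    MSupp (F - G) c := by
  intro m hm j hj
  rcases Finset.mem_union.mp (MvPolynomial.support_sub _ _ _ hm) with h | h
  · exact hF m h j hj
  · exact hG m h j hj

/-- From the relation version of quasi-regularity, deduce the `I^{n+1}` version. -/
lemma qa {c n : ℕ}
    (hQB : ∀ H : MvPolynomial ℕ R, H.IsHomogeneous n → MSupp H c → eval x H = 0 →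
      ∀ m, coeff m H ∈ Jd x c)
    {F : MvPolynomial ℕ R} (hF : F.IsHomogeneous n) (hs : MSupp F c)
    (he : eval x F ∈ Jd x c ^ (n + 1)) : ∀ m, coeff m F ∈ Jd x c := by
  obtain ⟨G, hGh, hGs, hGc, hGe⟩ := exists_poly_coeff x c n he
  intro m
  have h1 := hQB (F - G) (hF.sub hGh) (MSupp_sub hs hGs) (by simp [hGe]) m
  have h2 : coeff m F = coeff m (F - G) + coeff m G := by
    rw [coeff_sub]; ring
  rw [h2]
  exact add_mem h1 (hGc m)

/-- `x c` is a nonzerodivisor modulo all powers of `Jd x c`, given quasi-regularity. -/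
lemma sl {c : ℕ} (hreg : ∀ u, x c * u ∈ Jd x c → u ∈ Jd x c)
    (hQB : ∀ n, ∀ H : MvPolynomial ℕ R, H.IsHomogeneous n → MSupp H c → eval x H = 0 →
      ∀ m, coeff m H ∈ Jd x c) :
    ∀ d u, x c * u ∈ Jd x c ^ d → u ∈ Jd x c ^ d := by
  intro d
  induction d with
  | zero => intro u _; simp
  | succ d ih =>
    intro u hu
    have hu' : u ∈ Jd x c ^ d := ih u (Ideal.pow_le_pow_right (Nat.le_succ d) hu)
    obtain ⟨U, hUh, hUs, hUe⟩ := exists_poly x c d hu'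
    have hkey : ∀ m, coeff m (C (x c) * U) ∈ Jd x c := by
      refine qa x (hQB d) (hUh.C_mul _) (MSupp_C_mul hUs) ?_
      rw [eval_mul, eval_C, hUe]; exact hu
    have hcf : ∀ m, coeff m U ∈ Jd x c := by
      intro m
      have := hkey m
      rw [coeff_C_mul] at this
      exact hreg _ this
    have := eval_mem_pow_succ hUh
      (fun m hm j hj => mem_Jd (hUs m hm j hj)) hcf
    rwa [hUe] at this

/-- Quasi-regularity of regular sequences (relation version):
a homogeneous polynomial relation among `x 0, …, x (c-1)` has coefficients in
the ideal they generate. -/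
lemma qb : ∀ (c : ℕ), (∀ i < c, ∀ u, x i * u ∈ Jd x i → u ∈ Jd x i) →
    ∀ (n : ℕ) (H : MvPolynomial ℕ R), H.IsHomogeneous n → MSupp H c → eval x H = 0 →
    ∀ m, coeff m H ∈ Jd x c := by
  intro c
  induction c with
  | zero =>
    intro _ n H _ hs he m
    by_cases hm : m ∈ H.support
    · have hm0 : m = 0 := by
        rw [← Finsupp.support_eq_empty]
        by_contra h
        obtain ⟨j, hj⟩ := Finset.nonempty_iff_ne_empty.mpr h
        exact absurd (hs m hm j hj) (Nat.not_lt_zero j)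
      have hsub : H.support ⊆ {0} := by
        intro m' hm'
        rw [Finset.mem_singleton, ← Finsupp.support_eq_empty]
        by_contra h
        obtain ⟨j, hj⟩ := Finset.nonempty_iff_ne_empty.mpr h
        exact absurd (hs m' hm' j hj) (Nat.not_lt_zero j)
      have hss : H.support = {0} := Finset.Subset.antisymm hsub
        (Finset.singleton_subset_iff.mpr (hm0 ▸ hm))
      have : eval x H = coeff 0 H := by
        rw [eval_eq, hss, Finset.sum_singleton]
        simp
      rw [hm0, ← this, he]
      exact Ideal.zero_mem _
    · rw [MvPolynomial.notMem_support_iff.mp hm]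
      exact Ideal.zero_mem _
  | succ c ihc =>
    intro hreg n
    have hreg' : ∀ i < c, ∀ u, x i * u ∈ Jd x i → u ∈ Jd x i :=
      fun i hi => hreg i (hi.trans c.lt_succ_self)
    induction n with
    | zero =>
      intro H hh hs he m
      by_cases hm : m ∈ H.support
      · have hm0 : m = 0 := by
          rw [← Finsupp.degree_eq_zero_iff]
          exact isHom_degree hh (mem_support_iff.mp hm)
        have hsub : H.support ⊆ {0} := by
          intro m' hm'
          rw [Finset.mem_singleton, ← Finsupp.degree_eq_zero_iff]
          exact isHom_degree hh (mem_support_iff.mp hm')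
        have hss : H.support = {0} := Finset.Subset.antisymm hsub
          (Finset.singleton_subset_iff.mpr (hm0 ▸ hm))
        have : eval x H = coeff 0 H := by
          rw [eval_eq, hss, Finset.sum_singleton]
          simp
        rw [hm0, ← this, he]
        exact Ideal.zero_mem _
      · rw [MvPolynomial.notMem_support_iff.mp hm]
        exact Ideal.zero_mem _
    | succ s ihs =>
      intro H hh hs he m
      set ec : ℕ →₀ ℕ := Finsupp.single c 1 with hec
      set A := H.divMonomial ec with hA
      set Q := H.modMonomial ec with hQ
      have hcA : ∀ m', coeff m' A = coeff (ec + m') H := fun m' => coeff_divMonomial ec H m'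
      have hAh : A.IsHomogeneous s := by
        refine isHom_of fun m' hm' => ?_
        rw [hcA] at hm'
        have := isHom_degree hh hm'
        rw [degree_add', degree_single'] at this
        omega
      have hAs : MSupp A (c + 1) := by
        intro m' hm' j hj
        rw [mem_support_iff, hcA] at hm'
        refine hs _ (mem_support_iff.mpr hm') j ?_
        rw [Finsupp.mem_support_iff] at hj ⊢
        simp only [Finsupp.add_apply]
        omega
      have hQcases : ∀ m', coeff m' Q ≠ 0 → ¬ ec ≤ m' ∧ coeff m' Q = coeff m' H := by
        intro m' h
        by_cases hle : ec ≤ m'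
        · exact absurd (coeff_modMonomial_of_le H hle) h
        · exact ⟨hle, coeff_modMonomial_of_not_le H hle⟩
      have hQh : Q.IsHomogeneous (s + 1) := by
        refine isHom_of fun m' hm' => ?_
        obtain ⟨_, hcoe⟩ := hQcases m' hm'
        exact isHom_degree hh (hcoe ▸ hm')
      have hQs : MSupp Q c := by
        intro m' hm' j hj
        obtain ⟨hle, hcoe⟩ := hQcases m' (mem_support_iff.mp hm')
        have hj1 : j < c + 1 :=
          hs m' (mem_support_iff.mpr (hcoe ▸ mem_support_iff.mp hm')) j hj
        have hmc : m' c = 0 := by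
          by_contra h
          exact hle (Finsupp.single_le_iff.mpr (by omega))
        have : j ≠ c := by
          intro hjc
          rw [Finsupp.mem_support_iff, hjc, hmc] at hj
          exact hj rfl
        omega
      have heval : x c * eval x A + eval x Q = 0 := by
        have hdm := divMonomial_add_modMonomial H ec
        have := congrArg (eval x) hdm
        rw [map_add, eval_mul, eval_monomial] at this
        rw [← he, ← this]
        congr 1
        rw [one_mul, hec, Finsupp.prod_single_index (by simp), pow_one]
      have hQmem : eval x Q ∈ Jd x c ^ (s + 1) :=
        eval_mem_pow hQh (fun m' hm' j hj => mem_Jd (hQs m' hm' j hj))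
      have hxA : x c * eval x A ∈ Jd x c ^ (s + 1) := by
        have : x c * eval x A = -eval x Q := by linear_combination heval
        rw [this]; exact neg_mem hQmem
      have hAmem : eval x A ∈ Jd x c ^ (s + 1) :=
        sl x (hreg c c.lt_succ_self) (ihc hreg') (s + 1) _ hxA
      have hAcoeff : ∀ m', coeff m' A ∈ Jd x (c + 1) := by
        refine qa x ihs hAh hAs ?_
        exact Ideal.pow_right_mono (Jd_mono c.le_succ) (s + 1) hAmem
      obtain ⟨T, hTh, hTs, hTe⟩ := exists_poly x c (s + 1) hAmem
      have hW : ∀ m', coeff m' (Q + C (x c) * T) ∈ Jd x c := by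
        refine ihc hreg' (s + 1) _ (hQh.add (hTh.C_mul _)) (MSupp_add hQs (MSupp_C_mul hTs)) ?_
        rw [map_add, eval_mul, eval_C, hTe]
        linear_combination heval
      have hQcoeff : ∀ m', coeff m' Q ∈ Jd x (c + 1) := by
        intro m'
        have h1 := hW m'
        rw [coeff_add, coeff_C_mul] at h1
        have h2 : coeff m' Q = (coeff m' Q + x c * coeff m' T) - x c * coeff m' T := by ring
        rw [h2]
        refine sub_mem (Jd_mono c.le_succ h1) (Ideal.mul_mem_right _ _ (mem_Jd c.lt_succ_self))
      by_cases hle : ec ≤ m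
      · have h1 : coeff (m - ec) A = coeff m H := by
          rw [hcA]
          congr 1
          rw [add_comm]
          exact tsub_add_cancel_of_le hle
        rw [← h1]
        exact hAcoeff _
      · rw [← coeff_modMonomial_of_not_le H hle]
        exact hQcoeff m
end Ring

section Ord
variable {R : Type*} [CommRing R] (x : ℕ → R)

/-- Multiplicativity of the order function (via quasi-regularity). -/
lemma ord_mul {c : ℕ} (hreg : ∀ i < c, ∀ u, x i * u ∈ Jd x i → u ∈ Jd x i)
    (hpr : (Jd x c).IsPrime) {y z : R} {s t : ℕ}
    (hy : y ∈ Jd x c ^ s) (hy' : y ∉ Jd x c ^ (s + 1))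
    (hz : z ∈ Jd x c ^ t) (hz' : z ∉ Jd x c ^ (t + 1)) :
    y * z ∉ Jd x c ^ (s + t + 1) := by
  intro hmem
  obtain ⟨F, hFh, hFs, hFe⟩ := exists_poly x c s hy
  obtain ⟨G, hGh, hGs, hGe⟩ := exists_poly x c t hz
  have hcoeffs : ∀ m, coeff m (F * G) ∈ Jd x c := by
    refine qa x (qb x c hreg (s + t)) (hFh.mul hGh) (MSupp_mul hFs hGs) ?_
    rw [eval_mul, hFe, hGe]
    exact hmem
  haveI := hpr
  have hz0 : MvPolynomial.map (Ideal.Quotient.mk (Jd x c)) F *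
      MvPolynomial.map (Ideal.Quotient.mk (Jd x c)) G = 0 := by
    rw [← map_mul]
    ext m
    rw [coeff_map, coeff_zero]
    exact Ideal.Quotient.eq_zero_iff_mem.mpr (hcoeffs m)
  rcases mul_eq_zero.mp hz0 with h | h
  · have hc : ∀ m, coeff m F ∈ Jd x c := by
      intro m
      have := congrArg (coeff m) h
      rw [coeff_map, coeff_zero] at this
      exact Ideal.Quotient.eq_zero_iff_mem.mp this
    exact hy' (hFe ▸ eval_mem_pow_succ hFh
      (fun m hm j hj => mem_Jd (hFs m hm j hj)) hc)
  · have hc : ∀ m, coeff m G ∈ Jd x c := by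
      intro m
      have := congrArg (coeff m) h
      rw [coeff_map, coeff_zero] at this
      exact Ideal.Quotient.eq_zero_iff_mem.mp this
    exact hz' (hGe ▸ eval_mem_pow_succ hGh
      (fun m hm j hj => mem_Jd (hGs m hm j hj)) hc)

lemma pow_ord {c : ℕ} (hreg : ∀ i < c, ∀ u, x i * u ∈ Jd x i → u ∈ Jd x i)
    (hpr : (Jd x c).IsPrime) {y : R} {s : ℕ}
    (hy : y ∈ Jd x c ^ s) (hy' : y ∉ Jd x c ^ (s + 1)) :
    ∀ k : ℕ, y ^ k ∈ Jd x c ^ (k * s) ∧ y ^ k ∉ Jd x c ^ (k * s + 1) := by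
  intro k
  induction k with
  | zero =>
    constructor
    · simp
    · simp only [pow_zero, Nat.zero_mul, zero_add, pow_one]
      intro h1
      exact hpr.ne_top ((Ideal.eq_top_iff_one _).mpr h1)
  | succ k ih =>
    constructor
    · have : y ^ (k + 1) = y ^ k * y := by ring
      rw [this, Nat.succ_mul, pow_add]
      exact Ideal.mul_mem_mul ih.1 hy
    · have h1 : y ^ (k + 1) = y ^ k * y := by ring
      have h2 : (k + 1) * s + 1 = k * s + s + 1 := by ring
      rw [h1, h2]
      exact ord_mul x hreg hpr ih.1 ih.2 hy hy'
end Ord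

section IntClosed
open IsLocalRing

/-- Powers of the maximal ideal of a "regular" local ring are integrally closed. -/
lemma mem_pow_of_integral {R : Type*} [CommRing R] [IsLocalRing R]
    (hNoeth : IsNoetherianRing R) (x : ℕ → R) (d : ℕ)
    (hx : Jd x d = maximalIdeal R)
    (hreg : ∀ i < d, ∀ u, x i * u ∈ Jd x i → u ∈ Jd x i)
    (N k : ℕ) (hk : 0 < k) (y : R) (cf : ℕ → R)
    (hcf : ∀ i ∈ Finset.Icc 1 k, cf i ∈ maximalIdeal R ^ (N * i))
    (heq : y ^ k + ∑ i ∈ Finset.Icc 1 k, cf i * y ^ (k - i) = 0) :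
    y ∈ maximalIdeal R ^ N := by
  have hpr : (maximalIdeal R).IsPrime := (maximalIdeal.isMaximal R).isPrime
  rcases eq_or_ne y 0 with rfl | hy0
  · exact Ideal.zero_mem _
  haveI := hNoeth
  have hKrull : (⨅ i : ℕ, maximalIdeal R ^ i) = ⊥ :=
    Ideal.iInf_pow_eq_bot_of_isLocalRing _ hpr.ne_top
  have hex : ∃ i, y ∉ maximalIdeal R ^ i := by
    by_contra h
    push_neg at h
    refine hy0 ?_
    have hmem : y ∈ (⨅ i : ℕ, maximalIdeal R ^ i) := Submodule.mem_iInf _ |>.mpr h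
    rwa [hKrull, Submodule.mem_bot] at hmem
  classical
  set i0 := Nat.find hex with hi0def
  have hi0 : y ∉ maximalIdeal R ^ i0 := Nat.find_spec hex
  have hi0pos : 0 < i0 := by
    rcases Nat.eq_zero_or_pos i0 with h | h
    · rw [h] at hi0; simp at hi0
    · exact h
  set t := i0 - 1 with ht
  have hyt : y ∈ maximalIdeal R ^ t := by
    by_contra h
    have h2 : i0 ≤ t := Nat.find_le h
    omega
  have hyt' : y ∉ maximalIdeal R ^ (t + 1) := by
    have : t + 1 = i0 := by omega
    rw [this]; exact hi0
  by_cases hNt : N ≤ t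
  · exact Ideal.pow_le_pow_right hNt hyt
  push_neg at hNt
  exfalso
  have hprJ : (Jd x d).IsPrime := hx ▸ hpr
  have hytJ : y ∈ Jd x d ^ t := hx ▸ hyt
  have hytJ' : y ∉ Jd x d ^ (t + 1) := hx ▸ hyt'
  have hpow := (pow_ord x hreg hprJ hytJ hytJ' k).2
  apply hpow
  rw [hx]
  have hyk : y ^ k = -∑ i ∈ Finset.Icc 1 k, cf i * y ^ (k - i) :=
    eq_neg_of_add_eq_zero_left heq
  rw [hyk]
  refine neg_mem (Ideal.sum_mem _ fun i hi => ?_)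
  obtain ⟨hi1, hik⟩ := Finset.mem_Icc.mp hi
  have h1 : cf i * y ^ (k - i) ∈ maximalIdeal R ^ (N * i + t * (k - i)) := by
    rw [pow_add]
    refine Ideal.mul_mem_mul (hcf i hi) ?_
    rw [pow_mul]
    exact Ideal.pow_mem_pow hyt _
  refine Ideal.pow_le_pow_right ?_ h1
  have e1 : N * i + t * (k - i) = t * k + (N - t) * i := by
    have h2 : N * i = t * i + (N - t) * i := by
      rw [← Nat.add_mul]; congr 1; omega
    rw [h2]
    have h3 : t * i + t * (k - i) = t * k := by
      rw [← Nat.mul_add]; congr 1; omega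
    omega
  rw [e1]
  have h5 : 1 ≤ (N - t) * i := Nat.one_le_iff_ne_zero.mpr (by
    have : 0 < N - t := by omega
    positivity)
  have h6 : t * k = k * t := Nat.mul_comm _ _
  omega
end IntClosed

section Setup
variable {R : Type*} [CommRing R]

/-- Convert Mathlib's regular-sequence data into the `Jd`-based form. -/
lemma regular_setup [IsLocalRing R]
    (rs : List R) (hreg : RingTheory.Sequence.IsRegular R rs)
    (hspan : Ideal.span {x | x ∈ rs} = IsLocalRing.maximalIdeal R) :
    ∃ (x : ℕ → R) (d : ℕ), Jd x d = IsLocalRing.maximalIdeal R ∧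
      ∀ i < d, ∀ u, x i * u ∈ Jd x i → u ∈ Jd x i := by
  classical
  set d := rs.length with hd
  set x : ℕ → R := fun i => rs.getD i 0 with hx
  have hset : ∀ i ≤ d, x '' Set.Iio i = {r | r ∈ rs.take i} := by
    intro i hi
    ext r
    constructor
    · rintro ⟨j, hj, rfl⟩
      have hjd : j < d := lt_of_lt_of_le hj hi
      have h1 : x j = rs[j] := List.getD_eq_getElem rs 0 hjd
      have hjt : j < (rs.take i).length := by
        rw [List.length_take]
        exact lt_min hj hjd
      have h2 : rs[j] = (rs.take i)[j] := List.getElem_take.symm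
      rw [Set.mem_setOf_eq, h1, h2]
      exact List.getElem_mem _
    · intro hr
      obtain ⟨j, hj, rfl⟩ := List.mem_iff_getElem.mp hr
      rw [List.length_take] at hj
      have hjlen : j < i := hj.trans_le (min_le_left _ _)
      have hjd : j < rs.length := hj.trans_le (min_le_right _ _)
      refine ⟨j, hjlen, ?_⟩
      show rs.getD j 0 = _
      rw [List.getD_eq_getElem rs 0 hjd]
      exact List.getElem_take.symm
  have hJd : ∀ i ≤ d, Jd x i = Ideal.ofList (rs.take i) := by
    intro i hi
    rw [Jd, hset i hi]
    try rfl
  refine ⟨x, d, ?_, ?_⟩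
  · rw [hJd d le_rfl, List.take_length]
    exact hspan
  · intro i hi u hu
    have hsm := (RingTheory.Sequence.isWeaklyRegular_iff R rs).mp hreg.toIsWeaklyRegular i hi
    rw [hJd i hi.le] at hu ⊢
    have hxi : x i = rs[i] := List.getD_eq_getElem rs 0 hi
    have h0 : (rs[i] : R) •
        (Submodule.Quotient.mk u : R ⧸ (Ideal.ofList (rs.take i) • ⊤ : Submodule R R)) =
        rs[i] • (0 : R ⧸ (Ideal.ofList (rs.take i) • ⊤ : Submodule R R)) := by
      rw [smul_zero, ← Submodule.Quotient.mk_smul, Submodule.Quotient.mk_eq_zero,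
        smul_eq_mul, smul_eq_mul, Ideal.mul_top, ← hxi]
      exact hu
    have h1 := hsm h0
    rwa [Submodule.Quotient.mk_eq_zero, smul_eq_mul, Ideal.mul_top] at h1
end Setup

section Frob
/-- q-th powers of elements of `Ideal.map S.subtype I` come from q-th powers in `S`. -/
lemma pow_q_subring {B : Type*} [CommRing B] (S : Subring B) (q : ℕ) (hq : 0 < q)
    (hBq : ∀ b : B, b ^ q ∈ S)
    (hfrob : ∀ u v : B, (u + v) ^ q = u ^ q + v ^ q)
    (I : Ideal ↥S) {z : B} (hz : z ∈ Ideal.map S.subtype I) :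
    ∃ w : ↥S, w ∈ Ideal.span ((fun s : ↥S => s ^ q) '' (I : Set ↥S)) ∧ (w : B) = z ^ q := by
  have hz' : z ∈ Ideal.span (S.subtype '' (I : Set ↥S)) := hz
  refine Submodule.span_induction ?_ ?_ ?_ ?_ hz'
  · rintro _ ⟨s, hs, rfl⟩
    exact ⟨s ^ q, Ideal.subset_span ⟨s, hs, rfl⟩, by push_cast; rfl⟩
  · exact ⟨0, zero_mem _, by rw [zero_pow (by omega)]; rfl⟩
  · rintro u v _ _ ⟨w₁, hw₁, he₁⟩ ⟨w₂, hw₂, he₂⟩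
    exact ⟨w₁ + w₂, add_mem hw₁ hw₂, by rw [hfrob, ← he₁, ← he₂]; push_cast; rfl⟩
  · rintro r v _ ⟨w, hw, he⟩
    refine ⟨⟨r ^ q, hBq r⟩ * w, Ideal.mul_mem_left _ _ hw, ?_⟩
    rw [smul_eq_mul, mul_pow, ← he]
    push_cast
    rfl
end Frob

/-- Let `(S, n) ⊆ (B, M)` be a finite extension of local domains of characteristic
`p > 0`, with `S` regular and `F`-finite and `B ^ q ⊆ S` for `q = p ^ e`.  Then the
following are equivalent:
(i) `B ^ q ⊆ S ^ q + n ^ q` (inside `S`);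
(ii) `B = S + M` and `M` is the integral closure of the ideal `n B` in `B`. -/
theorem multiplicity_d_characterization
    (B : Type*) [CommRing B] [IsDomain B] [IsLocalRing B]
    (p : ℕ) [Fact p.Prime] [CharP B p] (e q : ℕ) (hq : q = p ^ e)
    (S : Subring B) [IsLocalRing ↥S]
    (hSreg : IsNoetherianRing ↥S ∧ ∃ rs : List ↥S,
      RingTheory.Sequence.IsRegular (↥S) rs ∧
      Ideal.span {x | x ∈ rs} = IsLocalRing.maximalIdeal ↥S)
    (hFfin : Module.Finite (↥(frobenius (↥S) p).range) ↥S)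
    (hfin : Module.Finite ↥S B)
    (hloc : ∀ x : ↥S, (x : B) ∈ IsLocalRing.maximalIdeal B ↔
      x ∈ IsLocalRing.maximalIdeal ↥S)
    (hBq : ∀ b : B, b ^ q ∈ S) :
    ((∀ b : B, ∃ σ : ↥S, ∃ g : ↥S, g ∈ IsLocalRing.maximalIdeal ↥S ^ q ∧
        b ^ q = (σ : B) ^ q + (g : B)) ↔
      ((∀ b : B, ∃ σ : ↥S, b - (σ : B) ∈ IsLocalRing.maximalIdeal B) ∧
        (∀ b : B, b ∈ IsLocalRing.maximalIdeal B ↔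
          ∃ m : ℕ, 0 < m ∧ ∃ a : ℕ → B,
            (∀ i, 1 ≤ i → i ≤ m →
              a i ∈ (Ideal.map S.subtype (IsLocalRing.maximalIdeal ↥S)) ^ i) ∧
            b ^ m + ∑ i ∈ Finset.Icc 1 m, a i * b ^ (m - i) = 0))) := by
  classical
  have hp2 : 2 ≤ p := (Fact.out : p.Prime).two_le
  have hq1 : 0 < q := hq ▸ (Nat.pow_pos (by omega) : 0 < p ^ e)
  set nS := IsLocalRing.maximalIdeal ↥S with hnS
  set M := IsLocalRing.maximalIdeal B with hM
  have hMprime : M.IsPrime := (IsLocalRing.maximalIdeal.isMaximal B).isPrime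
  have hnSprime : nS.IsPrime := (IsLocalRing.maximalIdeal.isMaximal ↥S).isPrime
  have hfrobB : ∀ u v : B, (u + v) ^ q = u ^ q + v ^ q := by
    intro u v; rw [hq]; exact add_pow_char_pow u v p e
  have hfrobB' : ∀ u v : B, (u - v) ^ q = u ^ q - v ^ q := by
    intro u v; rw [hq]; exact sub_pow_char_pow u v e
  constructor
  · intro hi
    constructor
    · intro b
      obtain ⟨σ, g, hg, hbq⟩ := hi b
      refine ⟨σ, ?_⟩
      have hgM : (g : B) ∈ M := (hloc g).mpr (Ideal.pow_le_self (by omega) hg)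
      have hsub : (b - (σ : B)) ^ q = (g : B) := by
        rw [hfrobB', hbq]; ring
      exact hMprime.mem_of_pow_mem q (hsub ▸ hgM)
    · intro b
      constructor
      · intro hb
        obtain ⟨σ, g, hg, hbq⟩ := hi b
        have hgM : (g : B) ∈ M := (hloc g).mpr (Ideal.pow_le_self (by omega) hg)
        have hσqM : ((σ ^ q : ↥S) : B) ∈ M := by
          push_cast
          have h1 : (σ : B) ^ q = b ^ q - (g : B) := by rw [hbq]; ring
          rw [h1]
          exact sub_mem (Ideal.pow_le_self (by omega) (Ideal.pow_mem_pow hb q)) hgM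
        have hσ : σ ∈ nS := hnSprime.mem_of_pow_mem q ((hloc _).mp hσqM)
        set v : ↥S := σ ^ q + g with hv
        refine ⟨q, by omega, fun i => if i = q then -((v : ↥S) : B) else 0, ?_, ?_⟩
        · intro i hi1 hiq
          show (if i = q then -((v : ↥S) : B) else 0) ∈ Ideal.map S.subtype nS ^ i
          by_cases h : i = q
          · rw [if_pos h, h]
            have hvm : v ∈ nS ^ q := add_mem (Ideal.pow_mem_pow hσ q) hg
            have : ((v : ↥S) : B) ∈ (Ideal.map S.subtype nS) ^ q := by
              rw [← Ideal.map_pow]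
              exact Ideal.mem_map_of_mem _ hvm
            exact neg_mem this
          · rw [if_neg h]; exact zero_mem _
        · have hsum : ∑ i ∈ Finset.Icc 1 q,
              (if i = q then -((v : ↥S) : B) else 0) * b ^ (q - i) = -((v : ↥S) : B) := by
            have h1 : ∀ i ∈ Finset.Icc 1 q,
                (if i = q then -((v : ↥S) : B) else 0) * b ^ (q - i) =
                (if i = q then -((v : ↥S) : B) else 0) := by
              intro i hi'
              by_cases h : i = q
              · rw [if_pos h, h, Nat.sub_self, pow_zero, mul_one]
              · rw [if_neg h, zero_mul]
            rw [Finset.sum_congr rfl h1, Finset.sum_ite_eq' (Finset.Icc 1 q) q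
              (fun _ => -((v : ↥S) : B)), if_pos (Finset.mem_Icc.mpr ⟨by omega, le_rfl⟩)]
          rw [hsum, hbq, hv]
          push_cast
          ring
      · rintro ⟨m, hm, a, ha, heq⟩
        have hmap : Ideal.map S.subtype nS ≤ M := by
          rw [Ideal.map_le_iff_le_comap]
          intro s hs
          exact (hloc s).mpr hs
        have hsumM : ∑ i ∈ Finset.Icc 1 m, a i * b ^ (m - i) ∈ M := by
          refine Ideal.sum_mem _ fun i hi' => ?_
          obtain ⟨h1, h2⟩ := Finset.mem_Icc.mp hi'
          exact Ideal.mul_mem_right _ _ (hmap (Ideal.pow_le_self (by omega) (ha i h1 h2)))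
        have hbm : b ^ m ∈ M := by
          have h1 : b ^ m = -∑ i ∈ Finset.Icc 1 m, a i * b ^ (m - i) :=
            eq_neg_of_add_eq_zero_left heq
          rw [h1]; exact neg_mem hsumM
        exact hMprime.mem_of_pow_mem m hbm
  · rintro ⟨hSM, hMint⟩ b
    obtain ⟨σ, hbσ⟩ := hSM b
    set m := b - (σ : B) with hmdef
    obtain ⟨k, hk, a, ha, heq⟩ := (hMint m).mp hbσ
    set y : ↥S := ⟨m ^ q, hBq m⟩ with hy
    have hcoef : ∀ i : ℕ, ∃ w : ↥S,
        i ∈ Finset.Icc 1 k → w ∈ nS ^ (q * i) ∧ (w : B) = (a i) ^ q := by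
      intro i
      by_cases hi' : i ∈ Finset.Icc 1 k
      · obtain ⟨h1, h2⟩ := Finset.mem_Icc.mp hi'
        have hai : a i ∈ Ideal.map S.subtype (nS ^ i) := by
          rw [Ideal.map_pow]
          exact ha i h1 h2
        obtain ⟨w, hw, hwe⟩ := pow_q_subring S q (by omega) hBq hfrobB (nS ^ i) hai
        refine ⟨w, fun _ => ⟨?_, hwe⟩⟩
        have hle : Ideal.span ((fun s : ↥S => s ^ q) '' ((nS ^ i : Ideal ↥S) : Set ↥S)) ≤
            nS ^ (q * i) := by
          rw [Ideal.span_le]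
          rintro _ ⟨s, hs, rfl⟩
          rw [mul_comm q i, pow_mul]
          exact Ideal.pow_mem_pow hs q
        exact hle hw
      · exact ⟨0, fun h => absurd h hi'⟩
    choose cS hcS using hcoef
    have hBeq : (m ^ k) ^ q + ∑ i ∈ Finset.Icc 1 k, (cS i : B) * ((m ^ (k - i)) ^ q) = 0 := by
      have h0 := congrArg (· ^ q) heq
      simp only [hfrobB] at h0
      rw [hq] at h0
      rw [sum_pow_char_pow p e (Finset.Icc 1 k) (fun i => a i * m ^ (k - i))] at h0
      rw [← hq] at h0
      have h1 : ∀ i ∈ Finset.Icc 1 k,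
          (a i * m ^ (k - i)) ^ q = (cS i : B) * (m ^ (k - i)) ^ q := by
        intro i hi'
        rw [mul_pow, (hcS i hi').2]
      rw [Finset.sum_congr rfl h1] at h0
      rw [zero_pow (by omega : q ≠ 0)] at h0
      exact h0
    have hSeq : y ^ k + ∑ i ∈ Finset.Icc 1 k, cS i * y ^ (k - i) = 0 := by
      apply Subtype.coe_injective
      push_cast
      have hyc : (y : B) = m ^ q := rfl
      calc ((y : B)) ^ k + ∑ i ∈ Finset.Icc 1 k, (cS i : B) * (y : B) ^ (k - i)
          = (m ^ k) ^ q + ∑ i ∈ Finset.Icc 1 k, (cS i : B) * ((m ^ (k - i)) ^ q) := by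
            rw [hyc]
            congr 1
            · rw [← pow_mul, mul_comm, pow_mul]
            · refine Finset.sum_congr rfl fun i _ => ?_
              rw [← pow_mul, mul_comm q (k - i), pow_mul]
        _ = 0 := hBeq
    obtain ⟨rs, hrs, hrsspan⟩ := hSreg.2
    obtain ⟨x, d, hxd, hregx⟩ := regular_setup rs hrs hrsspan
    have hymem : y ∈ nS ^ q := by
      refine mem_pow_of_integral hSreg.1 x d hxd hregx q k hk y cS
        (fun i hi' => (hcS i hi').1) hSeq
    refine ⟨σ, y, hymem, ?_⟩
    have hb : b = (σ : B) + m := by rw [hmdef]; ring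
    rw [hb, hfrobB]
    try rfl
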